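/- arXiv:2305.08937 — 6 statements merged into one kernel-verified Lean document; each statement's English description precedes it below -/
import Mathlib

section
/- Fix an integer $D\ge 3$ and define, for each $i$ with $1\le i\le D$, scalars $e_i^- = (4i-1-2D)/(6-8i+4D)$ (for $2\le i\le D$) and $e_i^+ = (4i-5-2D)/(6-8i+4D)$ (for $1\le i\le D-1$). Let $U$ be the tridiagonal matrix with diagonal entries $1$, subdiagonal entries $e_i^-$ and superdiagonal entries $e_i^+$. Then the denominators $6-8i+4D$ are nonzero, $e_i^-\ne 0$ and $e_i^+\ne 0$, and for $1\le s\le t\le D$ the determinant of the principal submatrix $U_{s,t}=(U_{ij})_{s\le i,j\le t}$ satisfies $\det(U_{s,t}) = \frac{(t-s+2)(2D-2t-2s+3)\prod_{i=0}^{t-s-1}(2D-4t+5+4i)}{2^{t-s+1}\prod_{i=0}^{t-s}(2D-4t+3+4i)}$; in particular every $U_{s,t}$ is nonsingular. -/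
open Finset

lemma odd_cast_ne {x : ℝ} (a b : ℕ) (hab : a ≠ b) (hx : x = (a:ℝ) - b) : x ≠ 0 := by
  subst hx
  exact sub_ne_zero.mpr (by exact_mod_cast hab)

noncomputable def PP (D s n : ℕ) : ℝ := ∏ i ∈ range n, (2*(D:ℝ) - 4*s - 4*n + 5 + 4*i)
noncomputable def QQ (D s n : ℕ) : ℝ := ∏ i ∈ range (n+1), (2*(D:ℝ) - 4*s - 4*n + 3 + 4*i)

lemma PP_ne (D s n : ℕ) : PP D s n ≠ 0 := by
  rw [PP, Finset.prod_ne_zero_iff]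
  intro i _
  exact odd_cast_ne (2*D+5+4*i) (4*s+4*n) (by omega) (by push_cast; ring)

lemma QQ_ne (D s n : ℕ) : QQ D s n ≠ 0 := by
  rw [QQ, Finset.prod_ne_zero_iff]
  intro i _
  exact odd_cast_ne (2*D+3+4*i) (4*s+4*n) (by omega) (by push_cast; ring)

lemma PP_s1 (D s k : ℕ) : PP D (s+1) (k+1) = PP D (s+2) k * (2*(D:ℝ) - 4*s - 3) := by
  rw [PP, PP, Finset.prod_range_succ]
  congr 1
  · exact Finset.prod_congr rfl (fun i _ => by push_cast; ring)
  · push_cast; ring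

lemma PP_s2 (D s k : ℕ) : PP D s (k+2) = PP D (s+2) k * ((2*(D:ℝ) - 4*s - 3) * (2*(D:ℝ) - 4*s + 1)) := by
  rw [PP, PP, Finset.prod_range_succ, Finset.prod_range_succ, mul_assoc]
  congr 1
  · exact Finset.prod_congr rfl (fun i _ => by push_cast; ring)
  · congr 1 <;> (push_cast; ring)

lemma QQ_s1 (D s k : ℕ) : QQ D (s+1) (k+1) = QQ D (s+2) k * (2*(D:ℝ) - 4*s - 1) := by
  rw [QQ, QQ, Finset.prod_range_succ]
  congr 1
  · exact Finset.prod_congr rfl (fun i _ => by push_cast; ring)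
  · push_cast; ring

lemma QQ_s2 (D s k : ℕ) : QQ D s (k+2) = QQ D (s+2) k * ((2*(D:ℝ) - 4*s - 1) * (2*(D:ℝ) - 4*s + 3)) := by
  rw [QQ, QQ, Finset.prod_range_succ, Finset.prod_range_succ, mul_assoc]
  congr 1
  · exact Finset.prod_congr rfl (fun i _ => by push_cast; ring)
  · congr 1 <;> (push_cast; ring)

lemma det_trid (n : ℕ) (M : ℕ → ℕ → ℝ)
    (h0 : ∀ j, 2 ≤ j → j ≤ n + 1 → M 0 j = 0)
    (h1 : ∀ i, 2 ≤ i → i ≤ n + 1 → M i 0 = 0) :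
    Matrix.det (Matrix.of fun i j : Fin (n+2) => M i j) =
      M 0 0 * Matrix.det (Matrix.of fun i j : Fin (n+1) => M (i+1) (j+1))
      - M 0 1 * M 1 0 * Matrix.det (Matrix.of fun i j : Fin n => M (i+2) (j+2)) := by
  rw [Matrix.det_succ_row_zero]
  rw [Fin.sum_univ_succ, Fin.sum_univ_succ]
  have htail : ∑ i : Fin n,
      ((-1 : ℝ)) ^ ((i.succ.succ : Fin (n+2)) : ℕ) * Matrix.of (fun i j : Fin (n+2) => M i j) 0 i.succ.succ *
        ((Matrix.of fun i j : Fin (n+2) => M i j).submatrix Fin.succ i.succ.succ.succAbove).det = 0 := by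
    apply Finset.sum_eq_zero
    intro i _
    have hz : M ((0 : Fin (n+2)) : ℕ) ((i.succ.succ : Fin (n+2)) : ℕ) = 0 := by
      have h2 : ((i.succ.succ : Fin (n+2)) : ℕ) = (i : ℕ) + 2 := by simp [Fin.val_succ]
      rw [h2]
      have : (0 : Fin (n+2)).val = 0 := rfl
      rw [this]
      exact h0 _ (by omega) (by omega)
    simp only [Matrix.of_apply, hz, mul_zero, zero_mul]
  rw [htail]
  have e0 : ((Matrix.of fun i j : Fin (n+2) => M i j).submatrix Fin.succ (Fin.succAbove 0)) =
      (Matrix.of fun i j : Fin (n+1) => M (i+1) (j+1)) := by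
    ext i j
    simp [Fin.zero_succAbove, Fin.val_succ]
  rw [e0]
  have e1 : ((Matrix.of fun i j : Fin (n+2) => M i j).submatrix Fin.succ (Fin.succ 0).succAbove).det
      = M 1 0 * (Matrix.of fun i j : Fin n => M (i+2) (j+2)).det := by
    rw [Matrix.det_succ_column_zero, Fin.sum_univ_succ]
    have htail2 : ∑ i : Fin n,
        ((-1 : ℝ)) ^ ((i.succ : Fin (n+1)) : ℕ) *
          (Matrix.of (fun i j : Fin (n+2) => M i j)).submatrix Fin.succ (Fin.succ 0).succAbove i.succ 0 *
          (((Matrix.of fun i j : Fin (n+2) => M i j).submatrix Fin.succ (Fin.succ 0).succAbove).submatrix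
            i.succ.succAbove Fin.succ).det = 0 := by
      apply Finset.sum_eq_zero
      intro i _
      have hc : ((Fin.succ 0 : Fin (n+2)).succAbove 0) = 0 := by
        simp [Fin.succAbove]
      have hz : (Matrix.of (fun i j : Fin (n+2) => M i j)).submatrix Fin.succ
          (Fin.succ 0).succAbove i.succ 0 = 0 := by
        simp only [Matrix.submatrix_apply, hc, Matrix.of_apply]
        have : ((i.succ.succ : Fin (n+2)) : ℕ) = (i : ℕ) + 2 := by simp [Fin.val_succ]
        rw [this]
        have h00 : ((0 : Fin (n+2)) : ℕ) = 0 := rfl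
        rw [h00]
        exact h1 _ (by omega) (by omega)
      rw [hz]; ring
    rw [htail2]
    have hc : ((Fin.succ 0 : Fin (n+2)).succAbove 0) = 0 := by simp [Fin.succAbove]
    have e2 : (((Matrix.of fun i j : Fin (n+2) => M i j).submatrix Fin.succ (Fin.succ 0).succAbove).submatrix
        (Fin.succAbove 0) Fin.succ) = (Matrix.of fun i j : Fin n => M (i+2) (j+2)) := by
      ext i j
      simp only [Matrix.submatrix_apply, Matrix.of_apply, Fin.zero_succAbove]
      rw [Fin.succ_succAbove_succ]
      simp [Fin.zero_succAbove, Fin.val_succ]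
    rw [e2]
    simp [hc]
  rw [e1]
  simp
  ring

lemma claim (D : ℕ) (hD : 3 ≤ D) (U : ℕ → ℕ → ℝ)
    (hU : ∀ i j, 1 ≤ i → i ≤ D → 1 ≤ j → j ≤ D →
      U i j = if i = j then 1
        else if i = j + 1 then (4 * (i : ℝ) - 1 - 2 * D) / (6 - 8 * i + 4 * D)
        else if j = i + 1 then (4 * (i : ℝ) - 5 - 2 * D) / (6 - 8 * i + 4 * D)
        else 0) :
    ∀ n s : ℕ, 1 ≤ s → s + n ≤ D →
      Matrix.det (Matrix.of fun i j : Fin (n+1) => U (s + i) (s + j)) =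
        (((n:ℝ) + 2) * (2*(D:ℝ) - 4*s - 2*n + 3) * PP D s n) / (2 ^ (n+1) * QQ D s n) := by
  have hdiag : ∀ a, 1 ≤ a → a ≤ D → U a a = 1 := by
    intro a h1 h2
    rw [hU a a h1 h2 h1 h2, if_pos rfl]
  have hsup : ∀ a, 1 ≤ a → a + 1 ≤ D →
      U a (a+1) = (4*(a:ℝ) - 5 - 2*D) / (6 - 8*(a:ℝ) + 4*D) := by
    intro a h1 h2
    rw [hU a (a+1) h1 (by omega) (by omega) h2, if_neg (by omega), if_neg (by omega), if_pos rfl]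
  have hsub : ∀ a, 1 ≤ a → a + 1 ≤ D →
      U (a+1) a = (4*((a:ℝ)+1) - 1 - 2*D) / (6 - 8*((a:ℝ)+1) + 4*D) := by
    intro a h1 h2
    rw [hU (a+1) a (by omega) h2 h1 (by omega), if_neg (by omega), if_pos rfl]
    push_cast; ring_nf
  intro n
  induction n using Nat.strong_induction_on with
  | _ n IH =>
  intro s hs hsD
  match n with
  | 0 =>
    rw [Matrix.det_fin_one]
    simp only [Matrix.of_apply, Fin.val_zero, Nat.add_zero]
    rw [hdiag s hs (by omega)]
    rw [PP, QQ]
    simp only [Finset.prod_range_succ, Finset.prod_range_zero, one_mul]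
    have hden : ((2:ℝ) ^ (0+1) * (2*(D:ℝ) - 4*(s:ℝ) - 4*(((0:ℕ)):ℝ) + 3 + 4*(((0:ℕ)):ℝ))) ≠ 0 :=
      mul_ne_zero (pow_ne_zero _ two_ne_zero)
        (odd_cast_ne (2*D+3) (4*s) (by omega) (by push_cast; ring))
    rw [eq_div_iff hden]
    push_cast; ring
  | 1 =>
    rw [Matrix.det_fin_two]
    simp only [Matrix.of_apply, Fin.val_zero, Fin.val_one, Nat.add_zero]
    rw [hdiag s hs (by omega), hdiag (s+1) (by omega) (by omega),
      hsup s hs (by omega), hsub s hs (by omega)]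
    rw [PP, QQ]
    simp only [Finset.prod_range_succ, Finset.prod_range_one, Finset.prod_range_zero]
    have hA : (6 - 8*(s:ℝ) + 4*(D:ℝ)) ≠ 0 :=
      odd_cast_ne (4*D+6) (8*s) (by omega) (by push_cast; ring)
    have hB : (6 - 8*((s:ℝ)+1) + 4*(D:ℝ)) ≠ 0 :=
      odd_cast_ne (4*D) (8*s+2) (by omega) (by push_cast; ring)
    have hden : ((2:ℝ) ^ (1+1) * (1 * (2*(D:ℝ) - 4*(s:ℝ) - 4*((1:ℕ):ℝ) + 3 + 4*((0:ℕ):ℝ)) *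
        (2*(D:ℝ) - 4*(s:ℝ) - 4*((1:ℕ):ℝ) + 3 + 4*((1:ℕ):ℝ)))) ≠ 0 := by
      apply mul_ne_zero (by norm_num)
      apply mul_ne_zero
      · rw [one_mul]
        exact odd_cast_ne (2*D+3) (4*s+4) (by omega) (by push_cast; ring)
      · exact odd_cast_ne (2*D+7) (4*s+4) (by omega) (by push_cast; ring)
    rw [div_mul_div_comm, one_mul, one_sub_div (mul_ne_zero hA hB),
      div_eq_div_iff (mul_ne_zero hA hB) hden]
    push_cast; ring
  | (k+2) =>
    have h0 : ∀ j, 2 ≤ j → j ≤ (k+1) + 1 → (fun a b => U (s+a) (s+b)) 0 j = 0 := by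
      intro j hj1 hj2
      show U (s+0) (s+j) = 0
      simp only [Nat.add_zero]
      rw [hU s (s+j) hs (by omega) (by omega) (by omega),
        if_neg (by omega), if_neg (by omega), if_neg (by omega)]
    have h1 : ∀ i, 2 ≤ i → i ≤ (k+1) + 1 → (fun a b => U (s+a) (s+b)) i 0 = 0 := by
      intro i hi1 hi2
      show U (s+i) (s+0) = 0
      simp only [Nat.add_zero]
      rw [hU (s+i) s (by omega) (by omega) hs (by omega),
        if_neg (by omega), if_neg (by omega), if_neg (by omega)]
    have hrec := det_trid (k+1) (fun a b => U (s+a) (s+b)) h0 h1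
    simp only [Nat.add_zero] at hrec
    have hcast : (Matrix.of fun i j : Fin (k+2+1) => U (s + (i:ℕ)) (s + (j:ℕ))).det =
        (Matrix.of fun i j : Fin ((k+1)+2) => U (s + (i:ℕ)) (s + (j:ℕ))).det := rfl
    rw [hcast, hrec]
    have m1 : (Matrix.of fun i j : Fin ((k+1)+1) => U (s+((i:ℕ)+1)) (s+((j:ℕ)+1))) =
        (Matrix.of fun i j : Fin ((k+1)+1) => U ((s+1) + (i:ℕ)) ((s+1) + (j:ℕ))) := by
      ext i j
      simp only [Matrix.of_apply]
      rw [show s+((i:ℕ)+1) = s+1+(i:ℕ) by omega, show s+((j:ℕ)+1) = s+1+(j:ℕ) by omega]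
    have m2 : (Matrix.of fun i j : Fin (k+1) => U (s+((i:ℕ)+2)) (s+((j:ℕ)+2))) =
        (Matrix.of fun i j : Fin (k+1) => U ((s+2) + (i:ℕ)) ((s+2) + (j:ℕ))) := by
      ext i j
      simp only [Matrix.of_apply]
      rw [show s+((i:ℕ)+2) = s+2+(i:ℕ) by omega, show s+((j:ℕ)+2) = s+2+(j:ℕ) by omega]
    rw [m1, m2, IH (k+1) (by omega) (s+1) (by omega) (by omega),
      IH k (by omega) (s+2) (by omega) (by omega)]
    rw [hdiag s hs (by omega), hsup s hs (by omega), hsub s hs (by omega)]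
    rw [PP_s1, QQ_s1, PP_s2, QQ_s2]
    -- now pure algebra
    have hA : (6 - 8*(s:ℝ) + 4*(D:ℝ)) ≠ 0 :=
      odd_cast_ne (4*D+6) (8*s) (by omega) (by push_cast; ring)
    have hB : (6 - 8*((s:ℝ)+1) + 4*(D:ℝ)) ≠ 0 :=
      odd_cast_ne (4*D) (8*s+2) (by omega) (by push_cast; ring)
    have hq1 : (2*(D:ℝ) - 4*(s:ℝ) - 1) ≠ 0 :=
      odd_cast_ne (2*D) (4*s+1) (by omega) (by push_cast; ring)
    have hq3 : (2*(D:ℝ) - 4*(s:ℝ) + 3) ≠ 0 :=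
      odd_cast_ne (2*D+3) (4*s) (by omega) (by push_cast; ring)
    have hQ := QQ_ne D (s+2) k
    have hD1 : ((2:ℝ) ^ (k+1+1) * (QQ D (s+2) k * (2*(D:ℝ) - 4*(s:ℝ) - 1))) ≠ 0 :=
      mul_ne_zero (pow_ne_zero _ two_ne_zero) (mul_ne_zero hQ hq1)
    have hD0 : ((6 - 8*(s:ℝ) + 4*(D:ℝ)) * (6 - 8*((s:ℝ)+1) + 4*(D:ℝ)) *
        ((2:ℝ) ^ (k+1) * QQ D (s+2) k)) ≠ 0 :=
      mul_ne_zero (mul_ne_zero hA hB) (mul_ne_zero (pow_ne_zero _ two_ne_zero) hQ)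
    have hD2 : ((2:ℝ) ^ (k+2+1) * (QQ D (s+2) k *
        ((2*(D:ℝ) - 4*(s:ℝ) - 1) * (2*(D:ℝ) - 4*(s:ℝ) + 3)))) ≠ 0 :=
      mul_ne_zero (pow_ne_zero _ two_ne_zero) (mul_ne_zero hQ (mul_ne_zero hq1 hq3))
    rw [one_mul, div_mul_div_comm, div_mul_div_comm,
      div_sub_div _ _ hD1 hD0, div_eq_div_iff (mul_ne_zero hD1 hD0) hD2]
    push_cast
    ring

/-- For an integer `D ≥ 3`, the tridiagonal matrix `U` with diagonal `1`,
subdiagonal entries `e_i^- = (4i-1-2D)/(6-8i+4D)` and superdiagonal entries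
`e_i^+ = (4i-5-2D)/(6-8i+4D)`: the denominators are nonzero, `e_i^- ≠ 0`, `e_i^+ ≠ 0`,
and for `1 ≤ s ≤ t ≤ D` the determinant of the principal submatrix `(U_{ij})_{s ≤ i,j ≤ t}`
equals `(t-s+2)(2D-2t-2s+3) ∏_{i=0}^{t-s-1}(2D-4t+5+4i) / (2^{t-s+1} ∏_{i=0}^{t-s}(2D-4t+3+4i))`;
in particular every such principal submatrix is nonsingular. -/
theorem stmt_2 (D : ℕ) (hD : 3 ≤ D)
    (U : ℕ → ℕ → ℝ)
    (hU : ∀ i j, 1 ≤ i → i ≤ D → 1 ≤ j → j ≤ D →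
      U i j = if i = j then 1
        else if i = j + 1 then (4 * (i : ℝ) - 1 - 2 * D) / (6 - 8 * i + 4 * D)
        else if j = i + 1 then (4 * (i : ℝ) - 5 - 2 * D) / (6 - 8 * i + 4 * D)
        else 0) :
    (∀ i : ℕ, 1 ≤ i → i ≤ D → (6 - 8 * (i : ℝ) + 4 * D) ≠ 0) ∧
    (∀ i : ℕ, 2 ≤ i → i ≤ D → (4 * (i : ℝ) - 1 - 2 * D) / (6 - 8 * i + 4 * D) ≠ 0) ∧
    (∀ i : ℕ, 1 ≤ i → i ≤ D - 1 → (4 * (i : ℝ) - 5 - 2 * D) / (6 - 8 * i + 4 * D) ≠ 0) ∧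
    (∀ s t : ℕ, 1 ≤ s → s ≤ t → t ≤ D →
      Matrix.det (Matrix.of (fun i j : Fin (t - s + 1) => U (s + i) (s + j)))
        = (((t : ℝ) - s + 2) * (2 * D - 2 * t - 2 * s + 3) *
            ∏ i ∈ Finset.range (t - s), (2 * (D : ℝ) - 4 * t + 5 + 4 * i)) /
          (2 ^ (t - s + 1) * ∏ i ∈ Finset.range (t - s + 1), (2 * (D : ℝ) - 4 * t + 3 + 4 * i)) ∧
      Matrix.det (Matrix.of (fun i j : Fin (t - s + 1) => U (s + i) (s + j))) ≠ 0) := by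
  refine ⟨?_, ?_, ?_, ?_⟩
  · intro i h1 h2
    exact odd_cast_ne (4*D+6) (8*i) (by omega) (by push_cast; ring)
  · intro i h1 h2
    exact div_ne_zero (odd_cast_ne (4*i) (2*D+1) (by omega) (by push_cast; ring))
      (odd_cast_ne (4*D+6) (8*i) (by omega) (by push_cast; ring))
  · intro i h1 h2
    exact div_ne_zero (odd_cast_ne (4*i) (2*D+5) (by omega) (by push_cast; ring))
      (odd_cast_ne (4*D+6) (8*i) (by omega) (by push_cast; ring))
  · intro s t hs hst htD
    obtain ⟨n, rfl⟩ : ∃ n, t = s + n := ⟨t - s, by omega⟩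
    rw [show s + n - s = n from by omega]
    have hdet := claim D hD U hU n s hs (by omega)
    have hPP : ∏ i ∈ Finset.range n, (2*(D:ℝ) - 4*(↑(s+n):ℝ) + 5 + 4*(i:ℝ)) = PP D s n := by
      rw [PP]
      exact Finset.prod_congr rfl (fun i _ => by push_cast; ring)
    have hQQ : ∏ i ∈ Finset.range (n+1), (2*(D:ℝ) - 4*(↑(s+n):ℝ) + 3 + 4*(i:ℝ)) = QQ D s n := by
      rw [QQ]
      exact Finset.prod_congr rfl (fun i _ => by push_cast; ring)
    constructor
    · refine hdet.trans ?_
      rw [← hPP, ← hQQ]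
      push_cast
      ring
    · refine ne_of_eq_of_ne hdet ?_
      apply div_ne_zero
      · refine mul_ne_zero (mul_ne_zero ?_ ?_) (PP_ne D s n)
        · positivity
        · exact odd_cast_ne (2*D+3) (4*s+2*n) (by omega) (by push_cast; ring)
      · exact mul_ne_zero (pow_ne_zero _ two_ne_zero) (QQ_ne D s n)
end

section
/- Let $\Gamma$ be a distance-regular graph with classical parameters $(D,q,\alpha,\beta)$, $D\ge 3$, $q\ne 0,\pm 1$ integer, and suppose $a_1 = 0$ and $a_2 = 0$, where $a_i = k - b_i - c_i$ with $c_i = [i]_q(1+\alpha[i-1]_q)$ and $b_i = ([D]_q - [i]_q)(\beta - \alpha[i]_q)$ and $[j]_q = 1+q+\cdots+q^{j-1}$. Then $\alpha = 0$ and $\beta = 1$. -/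
/-- For a distance-regular graph with classical parameters
`(D, q, α, β)`, `D ≥ 3`, with the usual formulas
`[j]_q = 1 + q + ⋯ + q^{j-1}`, `c_i = [i]_q (1 + α [i-1]_q)`,
`b_i = ([D]_q - [i]_q)(β - α [i]_q)`, `k = b_0`, `a_i = k - b_i - c_i`:
if `a_1 = 0` and `a_2 = 0`, then `α = 0` and `β = 1`. -/
theorem stmt_4 (D : ℕ) (hD : 3 ≤ D) (q α β : ℝ)
    (hq0 : q ≠ 0) (hq1 : q ≠ 1) (hqm1 : q ≠ -1)
    (br : ℕ → ℝ) (hbr : ∀ j, br j = ∑ m ∈ Finset.range j, q ^ m)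
    (hbrne : ∀ i, 1 ≤ i → i ≤ D → br i ≠ 0)
    (c b a : ℕ → ℝ)
    (hc : ∀ i, 1 ≤ i → i ≤ D → c i = br i * (1 + α * br (i - 1)))
    (hb : ∀ i, i ≤ D - 1 → b i = (br D - br i) * (β - α * br i))
    (ha : ∀ i, 1 ≤ i → i ≤ D - 1 → a i = b 0 - b i - c i)
    (ha1 : a 1 = 0) (ha2 : a 2 = 0) :
    α = 0 ∧ β = 1 := by
  have hbr0 : br 0 = 0 := by simp [hbr]
  have hbr1 : br 1 = 1 := by simp [hbr]
  have hbr2 : br 2 = 1 + q := by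
    rw [hbr]
    simp [Finset.sum_range_succ]
  have hq1' : (1 : ℝ) + q ≠ 0 := by
    intro h; apply hqm1; linarith
  have e1 : b 0 - b 1 - c 1 = 0 := by rw [← ha 1 (by omega) (by omega)]; exact ha1
  have e2 : b 0 - b 2 - c 2 = 0 := by rw [← ha 2 (by omega) (by omega)]; exact ha2
  rw [hb 0 (by omega), hb 1 (by omega), hc 1 (by omega) (by omega), hbr0, hbr1] at e1
  rw [hb 0 (by omega), hb 2 (by omega), hc 2 (by omega) (by omega), hbr0, hbr1, hbr2] at e2
  norm_num at e1 e2
  have hα2 : α * (1 + q) ^ 2 = 0 := by linear_combination (1 + q) * e1 - e2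
  have hα : α = 0 := by
    rcases mul_eq_zero.1 hα2 with h | h
    · exact h
    · exact absurd (pow_eq_zero_iff (by norm_num) |>.1 h) hq1'
  refine ⟨hα, ?_⟩
  rw [hα] at e1
  linarith [e1]
end

section
/- Let $d\ge 1$ and $D\ge d$ be integers with $D-d$ even, and set $\beta_i = (d-i+1)(2d-2i+3)$ for $1\le i\le d$ (with $\beta_i=0$ outside this range) and $\gamma_i = (i+1)(2i+1)$ for $0\le i\le d-1$ (with $\gamma_i=0$ outside). Let $r = (D-d)/2$, $e_j^- = (4j-1-2D)/(6-8j+4D)$, $e_j^+ = (4j-5-2D)/(6-8j+4D)$, $f_j = -(4j-5)(4j-1)+(16j-12)D-4D^2$. Then for all $1\le i\le d$, with $j = r+i$: $e_j^-\,\gamma_{i-2}\beta_{i-1} + \gamma_{i-1}\beta_i + e_j^+\,\gamma_i\beta_{i+1} = f_j$ (whenever the denominators $6-8j+4D$ are nonzero). -/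
/-- halved cube uniform identity, case `D - d` even. With
`β_i = (d-i+1)(2d-2i+3)` for `1 ≤ i ≤ d` (else `0`), `γ_i = (i+1)(2i+1)` for
`0 ≤ i ≤ d-1` (else `0`), endpoint `r = (D-d)/2`, and
`e_j^- = (4j-1-2D)/(6-8j+4D)`, `e_j^+ = (4j-5-2D)/(6-8j+4D)`,
`f_j = -(4j-5)(4j-1) + (16j-12)D - 4D^2`: for all `1 ≤ i ≤ d`, with `j = r+i`
(assuming the denominator `6-8j+4D` is nonzero),
`e_j^- γ_{i-2} β_{i-1} + γ_{i-1} β_i + e_j^+ γ_i β_{i+1} = f_j`. -/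
theorem stmt_11 (D d r : ℤ) (hd : 1 ≤ d) (hDd : d ≤ D) (hr : 2 * r = D - d)
    (β γ : ℤ → ℝ) (em ep f : ℤ → ℝ)
    (hβ : ∀ i : ℤ, β i = if 1 ≤ i ∧ i ≤ d then ((d : ℝ) - i + 1) * (2 * d - 2 * i + 3) else 0)
    (hγ : ∀ i : ℤ, γ i = if 0 ≤ i ∧ i ≤ d - 1 then ((i : ℝ) + 1) * (2 * i + 1) else 0)
    (hem : ∀ j : ℤ, em j = (4 * (j : ℝ) - 1 - 2 * D) / (6 - 8 * j + 4 * D))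
    (hep : ∀ j : ℤ, ep j = (4 * (j : ℝ) - 5 - 2 * D) / (6 - 8 * j + 4 * D))
    (hf : ∀ j : ℤ, f j = -(4 * (j : ℝ) - 5) * (4 * j - 1) + (16 * j - 12) * D - 4 * D ^ 2)
    (hden : ∀ i : ℤ, 1 ≤ i → i ≤ d → (6 - 8 * ((r : ℝ) + i) + 4 * D) ≠ 0) :
    ∀ i : ℤ, 1 ≤ i → i ≤ d →
      em (r + i) * γ (i - 2) * β (i - 1) + γ (i - 1) * β i + ep (r + i) * γ i * β (i + 1)
        = f (r + i) := by
  intro i h1 h2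
  have hD : (D : ℝ) = (d : ℝ) + 2 * r := by
    have : (2 : ℝ) * r = D - d := by exact_mod_cast hr
    linarith
  have hden' := hden i h1 h2
  rw [hβ, hβ, hβ, hγ, hγ, hγ, hem, hep, hf]
  push_cast
  rcases eq_or_lt_of_le h1 with h1' | h1' <;> rcases eq_or_lt_of_le h2 with h2' | h2'
  · -- i = 1 = d
    subst h2'; rw [if_neg (by omega), if_neg (by omega), if_pos (by omega),
      if_pos (by omega), if_neg (by omega), if_neg (by omega)]
    rw [hD] at *
    have h1'' : (i : ℝ) = 1 := by exact_mod_cast h1'.symm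
    field_simp
    rw [h1'']
    ring
  · -- i = 1 < d
    rw [if_neg (by omega), if_neg (by omega), if_pos (by omega),
      if_pos (by omega), if_pos (by omega), if_pos (by omega)]
    rw [hD] at *
    have hden'' : (6 - 8 * (i:ℝ) + 4 * d) ≠ 0 := by intro h; apply hden'; linarith
    rw [show (6:ℝ) - 8 * (r + i) + 4 * (d + 2 * r) = 6 - 8 * i + 4 * d by ring]
    generalize hX : (6 - 8 * (i:ℝ) + 4 * d) = X at hden'' ⊢
    have h1'' : (i : ℝ) = 1 := by exact_mod_cast h1'.symm
    field_simp
    subst hX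
    rw [h1'']
    ring
  · -- 1 < i = d
    rw [if_pos (by omega), if_pos (by omega), if_pos (by omega),
      if_pos (by omega), if_neg (by omega), if_neg (by omega)]
    rw [hD] at *
    have hden'' : (6 - 8 * (i:ℝ) + 4 * d) ≠ 0 := by intro h; apply hden'; linarith
    rw [show (6:ℝ) - 8 * (r + i) + 4 * (d + 2 * r) = 6 - 8 * i + 4 * d by ring]
    generalize hX : (6 - 8 * (i:ℝ) + 4 * d) = X at hden'' ⊢
    have h2'' : (i : ℝ) = d := by exact_mod_cast h2'
    field_simp
    subst hX
    rw [h2'']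
    ring
  · rw [if_pos (by omega), if_pos (by omega), if_pos (by omega),
      if_pos (by omega), if_pos (by omega), if_pos (by omega)]
    rw [hD] at *
    have hden'' : (6 - 8 * (i:ℝ) + 4 * d) ≠ 0 := by intro h; apply hden'; linarith
    rw [show (6:ℝ) - 8 * (r + i) + 4 * (d + 2 * r) = 6 - 8 * i + 4 * d by ring]
    generalize hX : (6 - 8 * (i:ℝ) + 4 * d) = X at hden'' ⊢
    field_simp
    subst hX
    ring
end

section
/- Let $d\ge 1$ and $D\ge d+1$ be integers with $D-d$ odd, and set $\beta_i = (d-i+1)(2d-2i+1)$ for $1\le i\le d$ ($\beta_i=0$ otherwise) and $\gamma_i = (i+1)(2i+3)$ for $0\le i\le d-1$ ($\gamma_i=0$ otherwise). Let $r=(D-d+1)/2$, and for integer $j$ let $e_j^- = (4j-1-2D)/(6-8j+4D)$, $e_j^+ = (4j-5-2D)/(6-8j+4D)$, $f_j = -(4j-5)(4j-1)+(16j-12)D-4D^2$. Then for all $1\le i\le d$, with $j=r+i$: $e_j^-\,\gamma_{i-2}\beta_{i-1} + \gamma_{i-1}\beta_i + e_j^+\,\gamma_i\beta_{i+1} = f_j$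 (whenever $6-8j+4D \ne 0$). -/
/-- halved cube uniform identity, case `D - d` odd. With
`β_i = (d-i+1)(2d-2i+1)` for `1 ≤ i ≤ d` (else `0`), `γ_i = (i+1)(2i+3)` for
`0 ≤ i ≤ d-1` (else `0`), endpoint `r = (D-d+1)/2`, and
`e_j^- = (4j-1-2D)/(6-8j+4D)`, `e_j^+ = (4j-5-2D)/(6-8j+4D)`,
`f_j = -(4j-5)(4j-1) + (16j-12)D - 4D^2`: for all `1 ≤ i ≤ d`, with `j = r+i`
(assuming the denominator `6-8j+4D` is nonzero),
`e_j^- γ_{i-2} β_{i-1} + γ_{i-1} β_i + e_j^+ γ_i β_{i+1} = f_j`. -/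
theorem stmt_12 (D d r : ℤ) (hd : 1 ≤ d) (hDd : d + 1 ≤ D) (hr : 2 * r = D - d + 1)
    (β γ : ℤ → ℝ) (em ep f : ℤ → ℝ)
    (hβ : ∀ i : ℤ, β i = if 1 ≤ i ∧ i ≤ d then ((d : ℝ) - i + 1) * (2 * d - 2 * i + 1) else 0)
    (hγ : ∀ i : ℤ, γ i = if 0 ≤ i ∧ i ≤ d - 1 then ((i : ℝ) + 1) * (2 * i + 3) else 0)
    (hem : ∀ j : ℤ, em j = (4 * (j : ℝ) - 1 - 2 * D) / (6 - 8 * j + 4 * D))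
    (hep : ∀ j : ℤ, ep j = (4 * (j : ℝ) - 5 - 2 * D) / (6 - 8 * j + 4 * D))
    (hf : ∀ j : ℤ, f j = -(4 * (j : ℝ) - 5) * (4 * j - 1) + (16 * j - 12) * D - 4 * D ^ 2)
    (hden : ∀ i : ℤ, 1 ≤ i → i ≤ d → (6 - 8 * ((r : ℝ) + i) + 4 * D) ≠ 0) :
    ∀ i : ℤ, 1 ≤ i → i ≤ d →
      em (r + i) * γ (i - 2) * β (i - 1) + γ (i - 1) * β i + ep (r + i) * γ i * β (i + 1)
        = f (r + i) := by
  intro i hi1 hi2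
  have hD : (D : ℝ) = 2 * (r : ℝ) + d - 1 := by
    have h : ((2 * r : ℤ) : ℝ) = ((D - d + 1 : ℤ) : ℝ) := by rw [hr]
    push_cast at h
    linarith
  have hden' := hden i hi1 hi2
  have hA : γ (i - 2) * β (i - 1) =
      (((i : ℝ) - 2) + 1) * (2 * ((i : ℝ) - 2) + 3) *
        (((d : ℝ) - ((i : ℝ) - 1) + 1) * (2 * d - 2 * ((i : ℝ) - 1) + 1)) := by
    rcases eq_or_lt_of_le hi1 with h1 | h1
    · rw [hγ, hβ, if_neg (by omega), ← h1]
      push_cast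
      ring
    · rw [hγ, hβ, if_pos (by omega), if_pos (by omega)]
      push_cast
      ring
  have hB : γ (i - 1) * β i =
      (((i : ℝ) - 1) + 1) * (2 * ((i : ℝ) - 1) + 3) *
        (((d : ℝ) - (i : ℝ) + 1) * (2 * d - 2 * (i : ℝ) + 1)) := by
    rw [hγ, hβ, if_pos (by omega), if_pos (by omega)]
    push_cast
    ring
  have hC : γ i * β (i + 1) =
      ((i : ℝ) + 1) * (2 * (i : ℝ) + 3) *
        (((d : ℝ) - ((i : ℝ) + 1) + 1) * (2 * d - 2 * ((i : ℝ) + 1) + 1)) := by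
    rcases eq_or_lt_of_le hi2 with h2 | h2
    · rw [hγ, hβ, if_neg (by omega), h2]
      push_cast
      ring
    · rw [hγ, hβ, if_pos (by omega), if_pos (by omega)]
      push_cast
      ring
  rw [hem, hep, hf, mul_assoc, mul_assoc, hA, hC]
  rw [hB]
  push_cast
  rw [hD] at hden' ⊢
  rw [mul_assoc, mul_assoc, div_mul_eq_mul_div, div_mul_eq_mul_div, add_right_comm, ← add_div, div_add' _ _ _ hden', div_eq_iff hden']
  ring
end

section
/- Fix nonnegative integers $\delta, p$. Define bilinear operators on the free module with basis $w_{\ell,j}$ ($0\le\ell\le\delta$, $0\le j\le p$, with $w_{\ell,j}=0$ outside this range) by $Lw_{\ell,j} = 3(\delta-\ell+1)w_{\ell-1,j} + (p-j+1)w_{\ell,j-1}$ and $Rw_{\ell,j} = 3(j+1)w_{\ell,j+1} + (\ell+1)w_{\ell+1,j}$. Then for all $(\ell,j)$: $-\tfrac12 RL^2 w_{\ell,j} + LRL\, w_{\ell,j} - \tfrac12 L^2R\, w_{\ell,j} = 3\,L w_{\ell,j}$. -/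
/-- Doob module computation. Let `M` be a real vector space with
vectors `w ℓ j` (zero outside `0 ≤ ℓ ≤ δ`, `0 ≤ j ≤ p`) and linear maps `L`, `R`
acting by `L w_{ℓ,j} = 3(δ-ℓ+1) w_{ℓ-1,j} + (p-j+1) w_{ℓ,j-1}` and
`R w_{ℓ,j} = 3(j+1) w_{ℓ,j+1} + (ℓ+1) w_{ℓ+1,j}` (formulas valid for all `ℓ, j`,
out-of-range terms being zero). Then for all `ℓ, j`:
`-(1/2) RL² w_{ℓ,j} + LRL w_{ℓ,j} - (1/2) L²R w_{ℓ,j} = 3 L w_{ℓ,j}`. -/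
theorem stmt_13 (δ p : ℤ) (hδ : 0 ≤ δ) (hp : 0 ≤ p)
    (M : Type*) [AddCommGroup M] [Module ℝ M]
    (w : ℤ → ℤ → M)
    (hw : ∀ ℓ j : ℤ, (ℓ < 0 ∨ δ < ℓ ∨ j < 0 ∨ p < j) → w ℓ j = 0)
    (L R : M →ₗ[ℝ] M)
    (hL : ∀ ℓ j : ℤ, L (w ℓ j)
      = (3 * ((δ : ℝ) - ℓ + 1)) • w (ℓ - 1) j + ((p : ℝ) - j + 1) • w ℓ (j - 1))
    (hR : ∀ ℓ j : ℤ, R (w ℓ j)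
      = (3 * ((j : ℝ) + 1)) • w ℓ (j + 1) + ((ℓ : ℝ) + 1) • w (ℓ + 1) j) :
    ∀ ℓ j : ℤ,
      -(1/2 : ℝ) • R (L (L (w ℓ j))) + L (R (L (w ℓ j))) - (1/2 : ℝ) • L (L (R (w ℓ j)))
        = (3 : ℝ) • L (w ℓ j) := by
  intro ℓ j
  simp only [hL, hR, map_add, map_smul, smul_add, smul_smul]
  push_cast
  ring_nf
  module
end

section
/- Let $G$ and $H$ be connected graphs, and for a graph $K$ with fixed vertex $v$ let $K_f(v)$ denote the graph on the same vertex set obtained by deleting all edges $yz$ with $d_K(v,y) = d_K(v,z)$. Then for any vertices $x$ of $G$ and $y$ of $H$, $(G\,\square\, H)_f((x,y)) = G_f(x)\,\square\, H_f(y)$, where $\square$ denotes the Cartesian product of graphs. -/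
/-- For a graph `G` and a fixed vertex `v`, the graph `G_f(v)` obtained by
deleting all edges `yz` with `dist(v,y) = dist(v,z)`. -/
def SimpleGraph.distDel {V : Type*} (G : SimpleGraph V) (v : V) : SimpleGraph V where
  Adj y z := G.Adj y z ∧ G.dist v y ≠ G.dist v z
  symm := ⟨fun _ _ h => ⟨h.1.symm, h.2.symm⟩⟩
  loopless := ⟨fun _ h => h.2 rfl⟩

open SimpleGraph in
private lemma dist_add_dist_le_walk_length {VG VH : Type*}
    {G : SimpleGraph VG} {H : SimpleGraph VH}
    (hG : G.Connected) (hH : H.Connected) :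
    ∀ {p q : VG × VH} (w : (G □ H).Walk p q),
      G.dist p.1 q.1 + H.dist p.2 q.2 ≤ w.length := by
  intro p q w
  induction w with
  | nil => simp
  | @cons u v q h w ih =>
    rw [SimpleGraph.Walk.length_cons]
    rcases h with ⟨hadj, he⟩ | ⟨hadj, he⟩
    · have h2 : G.dist u.1 v.1 ≤ 1 := by
        simpa using SimpleGraph.dist_le (SimpleGraph.Walk.cons hadj SimpleGraph.Walk.nil)
      have tri : G.dist u.1 q.1 ≤ G.dist u.1 v.1 + G.dist v.1 q.1 := hG.dist_triangle
      rw [he]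
      omega
    · have h2 : H.dist u.2 v.2 ≤ 1 := by
        simpa using SimpleGraph.dist_le (SimpleGraph.Walk.cons hadj SimpleGraph.Walk.nil)
      have tri : H.dist u.2 q.2 ≤ H.dist u.2 v.2 + H.dist v.2 q.2 := hH.dist_triangle
      rw [he]
      omega

open SimpleGraph in
private lemma boxProd_dist {VG VH : Type*}
    {G : SimpleGraph VG} {H : SimpleGraph VH}
    (hG : G.Connected) (hH : H.Connected) (p q : VG × VH) :
    (G □ H).dist p q = G.dist p.1 q.1 + H.dist p.2 q.2 := by
  apply le_antisymm
  · obtain ⟨w1, hw1⟩ := hG.exists_walk_length_eq_dist p.1 q.1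
    obtain ⟨w2, hw2⟩ := hH.exists_walk_length_eq_dist p.2 q.2
    have := SimpleGraph.dist_le ((w1.boxProdLeft H p.2).append (w2.boxProdRight G q.1))
    have h1 : (w1.boxProdLeft H p.2).length = w1.length := SimpleGraph.Walk.length_map _ _
    have h2 : (w2.boxProdRight G q.1).length = w2.length := SimpleGraph.Walk.length_map _ _
    simpa [SimpleGraph.Walk.length_append, h1, h2, hw1, hw2] using this
  · obtain ⟨w, hw⟩ := (hG.boxProd hH).exists_walk_length_eq_dist p q
    rw [← hw]
    exact dist_add_dist_le_walk_length hG hH w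

/-- For connected graphs `G`, `H` and vertices `x` of `G`, `y` of `H`,
`(G □ H)_f((x,y)) = G_f(x) □ H_f(y)`, where `□` is the Cartesian (box) product. -/
theorem stmt_16 {VG VH : Type*} [Fintype VG] [Fintype VH]
    (G : SimpleGraph VG) (H : SimpleGraph VH)
    (hG : G.Connected) (hH : H.Connected) (x : VG) (y : VH) :
    (G □ H).distDel (x, y) = (G.distDel x) □ (H.distDel y) := by
  ext ⟨a, b⟩ ⟨c, d⟩
  simp only [SimpleGraph.distDel, SimpleGraph.boxProd_adj, boxProd_dist hG hH]
  constructor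
  · rintro ⟨⟨hadj, he⟩ | ⟨hadj, he⟩, hne⟩
    · subst he
      exact Or.inl ⟨⟨hadj, by simpa using hne⟩, rfl⟩
    · subst he
      exact Or.inr ⟨⟨hadj, by simpa using hne⟩, rfl⟩
  · rintro (⟨⟨hadj, hne⟩, he⟩ | ⟨⟨hadj, hne⟩, he⟩)
    · subst he
      exact ⟨Or.inl ⟨hadj, rfl⟩, by simpa using hne⟩
    · subst he
      exact ⟨Or.inr ⟨hadj, rfl⟩, by simpa using hne⟩
end
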